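/- arXiv:2405.18698 — 4 statements merged into one kernel-verified Lean document; each statement's English description precedes it below -/
import Mathlib

section
/- For α ∈ [0,1) and an integrable random variable X, CVaR_α(X) = inf over β ∈ ℝ of E[(X - β)₊/(1-α)] + β, where CVaR_α(X) = (1/(1-α)) ∫_α¹ F_X⁻¹(u) du. -/
open MeasureTheory Set

/-- The (left-continuous) quantile function of a distribution `μ` on `ℝ`. -/
noncomputable def quantile (μ : Measure ℝ) (u : ℝ) : ℝ :=
  sInf {x | u ≤ (μ (Iic x)).toReal}

open Filter ProbabilityTheory
open scoped Topology

section Aux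

variable (μ : Measure ℝ) [IsProbabilityMeasure μ]

lemma quantile_eq (u : ℝ) : quantile μ u = sInf {x | u ≤ cdf μ x} := by
  unfold quantile
  congr 1
  ext x
  rw [mem_setOf_eq, mem_setOf_eq, cdf_eq_real, measureReal_def]

lemma quantile_le_iff {u x : ℝ} (hu : 0 < u) (hu1 : u < 1) :
    quantile μ u ≤ x ↔ u ≤ cdf μ x := by
  rw [quantile_eq]
  have hne : {y | u ≤ cdf μ y}.Nonempty := by
    have h1 : ∀ᶠ y in atTop, u ≤ cdf μ y :=
      (tendsto_cdf_atTop μ).eventually (eventually_ge_nhds hu1)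
    exact h1.exists
  have hbdd : BddBelow {y | u ≤ cdf μ y} := by
    have h0 : ∀ᶠ y in atBot, cdf μ y < u :=
      (tendsto_cdf_atBot μ).eventually (eventually_lt_nhds hu)
    obtain ⟨x₀, hx₀⟩ := h0.exists
    refine ⟨x₀, fun y hy => ?_⟩
    by_contra hxy
    exact absurd (le_trans hy (monotone_cdf μ (le_of_not_ge hxy))) (not_le.2 hx₀)
  constructor
  · intro h
    have key : u ≤ cdf μ (sInf {y | u ≤ cdf μ y}) := by
      set q := sInf {y | u ≤ cdf μ y} with hq
      have hT : Tendsto (cdf μ) (𝓝[>] q) (𝓝 (cdf μ q)) :=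
        ((cdf μ).right_continuous q).mono Ioi_subset_Ici_self
      refine ge_of_tendsto hT ?_
      filter_upwards [self_mem_nhdsWithin] with y hy
      obtain ⟨z, hz, hzy⟩ := exists_lt_of_csInf_lt hne hy
      exact le_trans hz (monotone_cdf μ hzy.le)
    exact le_trans key (monotone_cdf μ h)
  · intro h
    exact csInf_le hbdd h

lemma le_cdf_quantile {u : ℝ} (hu : 0 < u) (hu1 : u < 1) : u ≤ cdf μ (quantile μ u) :=
  (quantile_le_iff μ hu hu1).1 le_rfl

lemma quantile_monotoneOn : MonotoneOn (quantile μ) (Ioo 0 1) := by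
  intro u hu v hv huv
  exact (quantile_le_iff μ hu.1 hu.2).2 (le_trans huv (le_cdf_quantile μ hv.1 hv.2))

/-- `quantile` truncated to `(0,1)`, as a globally measurable function. -/
noncomputable def qhat (μ : Measure ℝ) : ℝ → ℝ := (Ioo (0:ℝ) 1).indicator (quantile μ)

lemma qhat_eq_on {u : ℝ} (hu : u ∈ Ioo (0:ℝ) 1) : qhat μ u = quantile μ u :=
  indicator_of_mem hu _

lemma measurable_qhat : Measurable (qhat μ) := by
  apply measurable_of_Iic
  intro x
  have : qhat μ ⁻¹' Iic x
      = (Ioo (0:ℝ) 1 ∩ Iic (cdf μ x)) ∪ ((Ioo (0:ℝ) 1)ᶜ ∩ {u | (0:ℝ) ≤ x}) := by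
    ext u
    by_cases hu : u ∈ Ioo (0:ℝ) 1
    · simp only [mem_preimage, mem_Iic, qhat, indicator_of_mem hu, mem_union, mem_inter_iff,
        hu, true_and, mem_compl_iff, not_true, false_and, or_false, mem_setOf_eq]
      exact quantile_le_iff μ hu.1 hu.2
    · simp only [mem_preimage, mem_Iic, qhat, indicator_of_notMem hu, mem_union, mem_inter_iff,
        hu, false_and, false_or, mem_compl_iff, not_false_iff, true_and, mem_setOf_eq]
  rw [this]
  exact ((measurableSet_Ioo.inter measurableSet_Iic).union
    (measurableSet_Ioo.compl.inter (MeasurableSet.const _)))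

lemma map_qhat : Measure.map (qhat μ) (volume.restrict (Ioo (0:ℝ) 1)) = μ := by
  have hmap : IsProbabilityMeasure (Measure.map (qhat μ) (volume.restrict (Ioo (0:ℝ) 1))) := by
    constructor
    rw [Measure.map_apply (measurable_qhat μ) MeasurableSet.univ]
    simp [Real.volume_Ioo]
  refine Measure.ext_of_Iic _ _ (fun x => ?_)
  rw [Measure.map_apply (measurable_qhat μ) measurableSet_Iic]
  have hset : qhat μ ⁻¹' Iic x ∩ Ioo (0:ℝ) 1 = Ioc 0 (min (cdf μ x) 1) ∩ Ioo 0 1 := by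
    ext u
    simp only [mem_inter_iff, mem_preimage, mem_Iic, mem_Ioc, mem_Ioo, le_min_iff]
    constructor
    · rintro ⟨h1, h2, h3⟩
      rw [qhat_eq_on μ ⟨h2, h3⟩] at h1
      exact ⟨⟨h2, (quantile_le_iff μ h2 h3).1 h1, h3.le⟩, h2, h3⟩
    · rintro ⟨⟨h2, h1, _⟩, hu⟩
      rw [qhat_eq_on μ hu]
      exact ⟨(quantile_le_iff μ hu.1 hu.2).2 h1, hu⟩
  rw [Measure.restrict_apply ((measurable_qhat μ) measurableSet_Iic), hset,
    ← ofReal_cdf μ x]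
  have h0 : 0 ≤ cdf μ x := cdf_nonneg μ x
  have h1 : cdf μ x ≤ 1 := cdf_le_one μ x
  rcases eq_or_lt_of_le h1 with h1e | h1l
  · rw [h1e, min_self]
    have : Ioc (0:ℝ) 1 ∩ Ioo 0 1 = Ioo 0 1 := by
      ext u
      simp only [mem_inter_iff, mem_Ioc, mem_Ioo]
      exact ⟨fun h => h.2, fun h => ⟨⟨h.1, h.2.le⟩, h⟩⟩
    rw [this, Real.volume_Ioo]
    norm_num
  · have : Ioc (0:ℝ) (min (cdf μ x) 1) ∩ Ioo 0 1 = Ioc 0 (cdf μ x) := by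
      rw [min_eq_left h1]
      ext u
      simp only [mem_inter_iff, mem_Ioc, mem_Ioo]
      exact ⟨fun h => h.1, fun h => ⟨h, h.1, lt_of_le_of_lt h.2 h1l⟩⟩
    rw [this, Real.volume_Ioc]
    simp [h0]

lemma integrable_qhat (hX : Integrable id μ) :
    Integrable (qhat μ) (volume.restrict (Ioo (0:ℝ) 1)) := by
  have h := (integrable_map_measure (f := qhat μ) (g := id)
      (by rw [map_qhat]; exact hX.aestronglyMeasurable)
      (measurable_qhat μ).aemeasurable).mp
  rw [map_qhat] at h
  exact h hX

lemma integral_comp_qhat (g : ℝ → ℝ) (hg : AEStronglyMeasurable g μ) :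
    ∫ x, g x ∂μ = ∫ u in Ioo (0:ℝ) 1, g (qhat μ u) := by
  have h := integral_map (μ := volume.restrict (Ioo (0:ℝ) 1)) (φ := qhat μ)
    (measurable_qhat μ).aemeasurable (f := g) (by rw [map_qhat]; exact hg)
  rw [map_qhat] at h
  exact h

end Aux

/-- Rockafellar–Uryasev dual representation of CVaR:
`CVaR_α(X) = inf_β E[(X - β)₊/(1-α)] + β` with
`CVaR_α(X) = (1/(1-α)) ∫_α¹ F_X⁻¹(u) du`. -/
theorem stmt_3 (α : ℝ) (hα : α ∈ Set.Ico (0:ℝ) 1)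
    (μ : Measure ℝ) [IsProbabilityMeasure μ] (hX : Integrable id μ) :
    IsGLB (Set.range fun β : ℝ => (∫ x, max (x - β) 0 / (1 - α) ∂μ) + β)
      ((1 / (1 - α)) * ∫ u in Set.Ioc α 1, quantile μ u) := by
  obtain ⟨hα0, hα1⟩ := hα
  have hc : (0:ℝ) < 1 - α := by linarith
  set Q := qhat μ with hQdef
  have hQint : IntegrableOn Q (Ioo (0:ℝ) 1) volume := integrable_qhat μ hX
  have hQmeas : Measurable Q := measurable_qhat μ
  have hT1 : (∫ u in Set.Ioc α 1, quantile μ u) = ∫ u in Ioo α 1, Q u := by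
    rw [integral_Ioc_eq_integral_Ioo]
    refine setIntegral_congr_fun measurableSet_Ioo (fun u hu => ?_)
    exact (qhat_eq_on μ ⟨lt_of_le_of_lt hα0 hu.1, hu.2⟩).symm
  have hsubα : Ioo α 1 ⊆ Ioo (0:ℝ) 1 := Ioo_subset_Ioo hα0 le_rfl
  have hFβ : ∀ β : ℝ, (∫ x, max (x - β) 0 / (1 - α) ∂μ) + β
      = (∫ u in Ioo (0:ℝ) 1, max (Q u - β) 0) / (1 - α) + β := by
    intro β
    rw [integral_div, integral_comp_qhat μ (fun x => max (x - β) 0)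
      (((continuous_id.sub continuous_const).max continuous_const).aestronglyMeasurable)]
  have hvol : volume (Ioo (0:ℝ) 1) < ⊤ := by rw [Real.volume_Ioo]; norm_num
  have hmax : ∀ β : ℝ, IntegrableOn (fun u => max (Q u - β) 0) (Ioo (0:ℝ) 1) volume :=
    fun β => (hQint.sub (integrableOn_const hvol.ne)).pos_part
  constructor
  · rintro y ⟨β, rfl⟩
    simp only
    rw [hFβ β, hT1]
    have hvolα : volume (Ioo α 1) < ⊤ := by rw [Real.volume_Ioo]; exact ENNReal.ofReal_lt_top
    have h1 : (∫ u in Ioo α 1, Q u) ≤ ∫ u in Ioo α 1, (max (Q u - β) 0 + β) := by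
      refine setIntegral_mono_on (hQint.mono_set hsubα)
        (((hmax β).mono_set hsubα).add (integrableOn_const hvolα.ne))
        measurableSet_Ioo (fun u _ => ?_)
      have := le_max_left (Q u - β) 0
      linarith
    have h2 : ∫ u in Ioo α 1, (max (Q u - β) 0 + β)
        = (∫ u in Ioo α 1, max (Q u - β) 0) + (1 - α) * β := by
      rw [integral_add ((hmax β).mono_set hsubα) (integrableOn_const hvolα.ne),
        setIntegral_const, measureReal_def, Real.volume_Ioo, ENNReal.toReal_ofReal (by linarith), smul_eq_mul]
    have h3 : (∫ u in Ioo α 1, max (Q u - β) 0) ≤ ∫ u in Ioo (0:ℝ) 1, max (Q u - β) 0 :=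
      setIntegral_mono_set (hmax β) (Eventually.of_forall fun u => le_max_right _ _)
        (HasSubset.Subset.eventuallyLE hsubα)
    have key : (∫ u in Ioo α 1, Q u)
        ≤ (∫ u in Ioo (0:ℝ) 1, max (Q u - β) 0) + (1 - α) * β := by linarith
    calc (1 / (1 - α)) * ∫ u in Ioo α 1, Q u
        ≤ (1/(1-α)) * ((∫ u in Ioo (0:ℝ) 1, max (Q u - β) 0) + (1 - α) * β) := by
          apply mul_le_mul_of_nonneg_left key; positivity
      _ = (∫ u in Ioo (0:ℝ) 1, max (Q u - β) 0) / (1 - α) + β := by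
          field_simp
  · intro b hb
    obtain ⟨t, s, htmem, hsα, hstn, hst, htt⟩ :
        ∃ t s : ℕ → ℝ, (∀ n, t n ∈ Ioo α 1) ∧ (∀ n, α < s n) ∧ (∀ n, s n < t n)
          ∧ (∀ n, 2 * s n - α = t n) ∧ Tendsto t atTop (𝓝 α) := by
      refine ⟨fun n => α + (1 - α)/2 * (1/((n:ℝ)+1)),
        fun n => α + (1 - α)/4 * (1/((n:ℝ)+1)), fun n => ?_, fun n => ?_, fun n => ?_,
        fun n => by ring, ?_⟩
      · have hn1 : (0:ℝ) < (n:ℝ) + 1 := by positivity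
        have h1 : (0:ℝ) < 1/((n:ℝ)+1) := by positivity
        have h2 : (1:ℝ)/((n:ℝ)+1) ≤ 1 := by
          rw [div_le_one hn1]
          have : (0:ℝ) ≤ (n:ℝ) := Nat.cast_nonneg n
          linarith
        exact ⟨by nlinarith, by nlinarith⟩
      · have h1 : (0:ℝ) < 1/((n:ℝ)+1) := by positivity
        nlinarith
      · have h1 : (0:ℝ) < 1/((n:ℝ)+1) := by positivity
        nlinarith
      · have h0 : Tendsto (fun n : ℕ => (1:ℝ)/((n:ℝ)+1)) atTop (𝓝 0) :=
          tendsto_one_div_add_atTop_nhds_zero_nat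
        have h1 := h0.const_mul ((1-α)/2)
        have h2 := (tendsto_const_nhds (x := α) (f := atTop (α := ℕ))).add h1
        simpa using h2
    have hbound : ∀ n : ℕ, b ≤ (1 / (1 - α)) * (∫ u in Set.Ioc α 1, quantile μ u)
        + 2/(1-α) * ∫ u in Ioc α (t n), |Q u| := by
      intro n
      have hαs := hsα n
      have hstn' := hstn n
      obtain ⟨hαt, ht1⟩ := htmem n
      have hs1 : s n < 1 := hstn'.trans ht1
      have hs0 : 0 < s n := lt_of_le_of_lt hα0 hαs
      set β := quantile μ (s n) with hβdef
      have hIocs : Ioc (0:ℝ) (s n) ⊆ Ioo (0:ℝ) 1 := fun u hu => ⟨hu.1, lt_of_le_of_lt hu.2 hs1⟩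
      have hIoos1 : Ioo (s n) 1 ⊆ Ioo (0:ℝ) 1 := Ioo_subset_Ioo hs0.le le_rfl
      have hIocst : Ioc (s n) (t n) ⊆ Ioo (0:ℝ) 1 :=
        fun u hu => ⟨lt_trans hs0 hu.1, lt_of_le_of_lt hu.2 ht1⟩
      have hIocαs : Ioc α (s n) ⊆ Ioo (0:ℝ) 1 :=
        fun u hu => ⟨lt_of_le_of_lt hα0 hu.1, lt_of_le_of_lt hu.2 hs1⟩
      have hIocαt : Ioc α (t n) ⊆ Ioo (0:ℝ) 1 :=
        fun u hu => ⟨lt_of_le_of_lt hα0 hu.1, lt_of_le_of_lt hu.2 ht1⟩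
      have hsplit0 : Ioc (0:ℝ) (s n) ∪ Ioo (s n) 1 = Ioo (0:ℝ) 1 :=
        Ioc_union_Ioo_eq_Ioo hs0.le hs1
      have hdisj0 : Disjoint (Ioc (0:ℝ) (s n)) (Ioo (s n) 1) :=
        disjoint_left.2 fun u h1 h2 => absurd h1.2 (not_le.2 h2.1)
      have hA : (∫ u in Ioo (0:ℝ) 1, max (Q u - β) 0)
          = (∫ u in Ioo (s n) 1, Q u) - (1 - s n) * β := by
        rw [← hsplit0, setIntegral_union hdisj0 measurableSet_Ioo
          ((hmax β).mono_set (hsplit0 ▸ hIocs))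
          ((hmax β).mono_set (hsplit0 ▸ hIoos1))]
        have hzero : ∫ u in Ioc (0:ℝ) (s n), max (Q u - β) 0 = 0 := by
          rw [setIntegral_congr_fun measurableSet_Ioc
            (g := fun _ => (0:ℝ)) (fun u hu => ?_), integral_zero]
          have hu1 : u ∈ Ioo (0:ℝ) 1 := hIocs hu
          have hQle : Q u ≤ β := by
            rw [hQdef, qhat_eq_on μ hu1, hβdef]
            exact quantile_monotoneOn μ hu1 ⟨hs0, hs1⟩ hu.2
          exact max_eq_right (by linarith : Q u - β ≤ 0)
        have hlin : ∫ u in Ioo (s n) 1, max (Q u - β) 0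
            = (∫ u in Ioo (s n) 1, Q u) - (1 - s n) * β := by
          rw [setIntegral_congr_fun measurableSet_Ioo
            (g := fun u => Q u - β) (fun u hu => ?_)]
          · rw [integral_sub (hQint.mono_set hIoos1)
              (integrableOn_const (by rw [Real.volume_Ioo]; exact ENNReal.ofReal_ne_top)),
              setIntegral_const, measureReal_def, Real.volume_Ioo,
              ENNReal.toReal_ofReal (by linarith), smul_eq_mul]
          · have hu1 : u ∈ Ioo (0:ℝ) 1 := hIoos1 hu
            have hQge : β ≤ Q u := by
              rw [hQdef, qhat_eq_on μ hu1, hβdef]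
              exact quantile_monotoneOn μ ⟨hs0, hs1⟩ hu1 hu.1.le
            exact max_eq_left (by linarith : (0:ℝ) ≤ Q u - β)
        rw [hzero, hlin, zero_add]
      have hsplitα : Ioc α (s n) ∪ Ioo (s n) 1 = Ioo α 1 :=
        Ioc_union_Ioo_eq_Ioo hαs.le hs1
      have hdisjα : Disjoint (Ioc α (s n)) (Ioo (s n) 1) :=
        disjoint_left.2 fun u h1 h2 => absurd h1.2 (not_le.2 h2.1)
      have hTsplit : (∫ u in Ioo α 1, Q u)
          = (∫ u in Ioc α (s n), Q u) + ∫ u in Ioo (s n) 1, Q u := by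
        rw [← hsplitα, setIntegral_union hdisjα measurableSet_Ioo
          (hQint.mono_set hIocαs) (hQint.mono_set hIoos1)]
      have hβb : (s n - α) * β ≤ ∫ u in Ioc α (t n), |Q u| := by
        have step1 : (s n - α) * β ≤ ∫ u in Ioc (s n) (t n), Q u := by
          have hconst : ∫ u in Ioc (s n) (t n), (fun _ => β) u = (t n - s n) * β := by
            rw [setIntegral_const, measureReal_def, Real.volume_Ioc, smul_eq_mul,
              ENNReal.toReal_ofReal (by linarith)]
          have hmono : ∫ u in Ioc (s n) (t n), (fun _ => β) u ≤ ∫ u in Ioc (s n) (t n), Q u := by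
            refine setIntegral_mono_on
              (integrableOn_const (by rw [Real.volume_Ioc]; exact ENNReal.ofReal_ne_top))
              (hQint.mono_set hIocst) measurableSet_Ioc (fun u hu => ?_)
            have hu1 : u ∈ Ioo (0:ℝ) 1 := hIocst hu
            rw [hQdef, qhat_eq_on μ hu1, hβdef]
            exact quantile_monotoneOn μ ⟨hs0, hs1⟩ hu1 hu.1.le
          have htn : t n - s n = s n - α := by rw [← hst n]; ring
          rw [hconst, htn] at hmono
          exact hmono
        have step2 : (∫ u in Ioc (s n) (t n), Q u) ≤ ∫ u in Ioc (s n) (t n), |Q u| :=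
          setIntegral_mono_on (hQint.mono_set hIocst) ((hQint.mono_set hIocst).abs)
            measurableSet_Ioc (fun u _ => le_abs_self _)
        have step3 : (∫ u in Ioc (s n) (t n), |Q u|) ≤ ∫ u in Ioc α (t n), |Q u| :=
          setIntegral_mono_set ((hQint.mono_set hIocαt).abs)
            (Eventually.of_forall fun u => abs_nonneg _)
            (HasSubset.Subset.eventuallyLE (Ioc_subset_Ioc_left hαs.le))
        linarith
      have hX2 : -(∫ u in Ioc α (s n), Q u) ≤ ∫ u in Ioc α (t n), |Q u| := by
        have h1 : ‖∫ u in Ioc α (s n), Q u‖ ≤ ∫ u in Ioc α (s n), ‖Q u‖ :=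
          norm_integral_le_integral_norm _
        simp only [Real.norm_eq_abs] at h1
        have h2 : (∫ u in Ioc α (s n), |Q u|) ≤ ∫ u in Ioc α (t n), |Q u| :=
          setIntegral_mono_set ((hQint.mono_set hIocαt).abs)
            (Eventually.of_forall fun u => abs_nonneg _)
            (HasSubset.Subset.eventuallyLE (Ioc_subset_Ioc_right hstn'.le))
        linarith [abs_le.1 h1, neg_abs_le (∫ u in Ioc α (s n), Q u)]
      have hbF : b ≤ (∫ u in Ioo (0:ℝ) 1, max (Q u - β) 0) / (1 - α) + β := by
        rw [← hFβ β]
        exact hb ⟨β, rfl⟩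
      set X1 := ∫ u in Ioo (s n) 1, Q u
      set X2 := ∫ u in Ioc α (s n), Q u
      set I := ∫ u in Ioc α (t n), |Q u|
      have e1 : (X1 - (1 - s n) * β) / (1 - α) + β = (X1 + (s n - α) * β) / (1 - α) := by
        field_simp
        ring
      have hnum : X1 + (s n - α) * β ≤ X1 + X2 + 2 * I := by linarith
      have e2 : (X1 + X2 + 2 * I) / (1 - α)
          = (1 / (1 - α)) * (∫ u in Set.Ioc α 1, quantile μ u) + 2/(1-α) * I := by
        rw [hT1, hTsplit]
        field_simp
        ring
      calc b ≤ (X1 - (1 - s n) * β) / (1 - α) + β := by rw [← hA]; exact hbF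
        _ = (X1 + (s n - α) * β) / (1 - α) := e1
        _ ≤ (X1 + X2 + 2 * I) / (1 - α) := by gcongr
        _ = _ := e2
    have hIconv : Tendsto (fun n => ∫ u in Ioc α (t n), |Q u|) atTop (𝓝 0) := by
      have hmeasF : ∀ n : ℕ, AEStronglyMeasurable ((Ioc α (t n)).indicator (fun v => |Q v|))
          (volume.restrict (Ioo (0:ℝ) 1)) :=
        fun n => (hQmeas.abs.indicator measurableSet_Ioc).aestronglyMeasurable
      have hbnd : ∀ n : ℕ, ∀ᵐ u ∂(volume.restrict (Ioo (0:ℝ) 1)),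
          ‖(Ioc α (t n)).indicator (fun v => |Q v|) u‖ ≤ |Q u| := by
        intro n
        refine Eventually.of_forall fun u => ?_
        rw [Real.norm_eq_abs]
        by_cases hm : u ∈ Ioc α (t n)
        · rw [indicator_of_mem hm, abs_abs]
        · rw [indicator_of_notMem hm]
          simpa using abs_nonneg (Q u)
      have hptwise : ∀ᵐ u ∂(volume.restrict (Ioo (0:ℝ) 1)),
          Tendsto (fun n : ℕ => (Ioc α (t n)).indicator (fun v => |Q v|) u) atTop (𝓝 0) := by
        refine Eventually.of_forall fun u => ?_
        rcases le_or_gt u α with h | h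
        · have hz : ∀ n : ℕ, (Ioc α (t n)).indicator (fun v => |Q v|) u = 0 := by
            intro n
            refine indicator_of_notMem (fun hm => ?_) _
            exact absurd hm.1 (not_lt.2 h)
          exact Tendsto.congr (fun n => (hz n).symm) tendsto_const_nhds
        · have hev : ∀ᶠ n in atTop, t n < u := htt.eventually (eventually_lt_nhds h)
          refine Tendsto.congr' ?_ tendsto_const_nhds
          filter_upwards [hev] with n hn
          refine (indicator_of_notMem (fun hm => ?_) _).symm
          exact absurd hm.2 (not_le.2 hn)
      have hdom := tendsto_integral_of_dominated_convergence (fun u => |Q u|)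
        hmeasF hQint.abs hbnd hptwise
      simp only [integral_zero] at hdom
      refine hdom.congr (fun n => ?_)
      have hsubn : Ioc α (t n) ⊆ Ioo (0:ℝ) 1 :=
        fun u hu => ⟨lt_of_le_of_lt hα0 hu.1, lt_of_le_of_lt hu.2 (htmem n).2⟩
      rw [integral_indicator measurableSet_Ioc, Measure.restrict_restrict measurableSet_Ioc,
        inter_eq_self_of_subset_left hsubn]
    have hlim : Tendsto (fun n => (1 / (1 - α)) * (∫ u in Set.Ioc α 1, quantile μ u)
        + 2/(1-α) * ∫ u in Ioc α (t n), |Q u|) atTop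
        (𝓝 ((1 / (1 - α)) * ∫ u in Set.Ioc α 1, quantile μ u)) := by
      have h := (tendsto_const_nhds (x := (1 / (1 - α)) * (∫ u in Set.Ioc α 1, quantile μ u))
        (f := atTop (α := ℕ))).add (hIconv.const_mul (2/(1-α)))
      simpa using h
    exact ge_of_tendsto hlim (Eventually.of_forall hbound)
end

section
/- Combining the two previous facts: if σ is an increasing nonnegative spectrum with ∫₀¹ σ = 1 and X has quantile function bounded in absolute value by C_max/(1-γ), then there exists a step-function spectrum σ̃ with M levels such that |R_σ(X) - R_σ̃(X)| ≤ C_max·σ(1)/((1-γ)·M). -/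
open MeasureTheory Set

theorem stmt_6 (M : ℕ) (hM : 0 < M) (Cmax γ : ℝ) (hC : 0 < Cmax)
    (hγ : γ ∈ Set.Ioo (0:ℝ) 1)
    (σ : ℝ → ℝ) (hσm : MonotoneOn σ (Set.Icc 0 1))
    (hσn : ∀ u ∈ Set.Icc (0:ℝ) 1, 0 ≤ σ u)
    (hσi : (∫ u in Set.Icc (0:ℝ) 1, σ u) = 1) (hσmeas : Measurable σ)
    (q : ℝ → ℝ) (hqmeas : Measurable q)
    (hq : ∀ᵐ u ∂(volume.restrict (Set.Icc (0:ℝ) 1)), |q u| ≤ Cmax / (1 - γ)) :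
    ∃ (η a : ℕ → ℝ),
      (∀ i ∈ Finset.Icc 1 M, 0 ≤ η i) ∧
      (∀ i ∈ Finset.Icc 1 (M - 1), η i ≤ η (i + 1)) ∧
      (∀ i ∈ Finset.Icc 1 (M - 1), a i ∈ Set.Icc (0:ℝ) 1) ∧
      (∀ i ∈ Finset.Icc 1 (M - 2), a i ≤ a (i + 1)) ∧
      |(∫ u in Set.Icc (0:ℝ) 1, q u * σ u) -
        ∫ u in Set.Icc (0:ℝ) 1, q u * (η 1 + ∑ i ∈ Finset.Icc 1 (M - 1),
          (η (i + 1) - η i) * (if a i ≤ u then (1:ℝ) else 0))| ≤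
      Cmax * σ 1 / ((1 - γ) * M) := by
  obtain ⟨hγ0, hγ1⟩ := hγ
  have h1γ : (0:ℝ) < 1 - γ := by linarith
  have hMR : (0:ℝ) < M := by exact_mod_cast hM
  set C' : ℝ := Cmax / (1 - γ) with hC'
  have hC'0 : 0 ≤ C' := le_of_lt (div_pos hC h1γ)
  set G : ℕ → ℝ := fun k => σ ((k : ℝ) / M) with hGdef
  have hmem : ∀ k : ℕ, k ≤ M → ((k:ℝ)/M) ∈ Icc (0:ℝ) 1 := by
    intro k hk
    constructor
    · positivity
    · rw [div_le_one hMR]; exact_mod_cast hk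
  set η : ℕ → ℝ := fun i => G (i - 1) with hηdef
  set a : ℕ → ℝ := fun i => (i : ℝ) / M with hadef
  have hη1 : η 1 = G 0 := by simp [hηdef]
  have hηs : ∀ i : ℕ, 1 ≤ i → η (i + 1) = G i ∧ η i = G (i - 1) := by
    intro i hi; exact ⟨by simp [hηdef], rfl⟩
  refine ⟨η, a, ?_, ?_, ?_, ?_, ?_⟩
  · intro i hi
    simp only [Finset.mem_Icc] at hi
    exact hσn _ (hmem (i-1) (by omega))
  · intro i hi
    simp only [Finset.mem_Icc] at hi
    have h1 : ((i:ℝ) - 1)/M ≤ (i:ℝ)/M := by gcongr; linarith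
    have hc : ((i - 1 : ℕ) : ℝ) = (i:ℝ) - 1 := by
      have : 1 ≤ i := hi.1; push_cast [this]; ring
    simp only [hηdef, hGdef]
    rw [Nat.add_sub_cancel, hc]
    exact hσm (by rw [← hc]; exact hmem _ (by omega)) (hmem _ (by omega)) h1
  · intro i hi
    simp only [Finset.mem_Icc] at hi
    exact hmem i (by omega)
  · intro i hi
    simp only [hadef]
    push_cast
    gcongr
    linarith
  -- main bound
  set s : ℝ → ℝ := fun u => η 1 + ∑ i ∈ Finset.Icc 1 (M - 1),
      (η (i + 1) - η i) * (if a i ≤ u then (1:ℝ) else 0) with hsdef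
  -- telescoping
  have tel : ∀ k : ℕ, (∑ i ∈ Finset.Icc 1 k, (G i - G (i - 1))) = G k - G 0 := by
    intro k
    induction k with
    | zero => simp
    | succ n ih =>
      rw [Finset.sum_Icc_succ_top (by omega : 1 ≤ n + 1), ih]
      simp only [Nat.add_sub_cancel]
      ring
  -- evaluation of s on a piece
  have hs_eval : ∀ k : ℕ, k < M → ∀ u : ℝ, u ∈ Ico ((k:ℝ)/M) (((k:ℝ)+1)/M) → s u = G k := by
    intro k hk u hu
    have hcond : ∀ i ∈ Finset.Icc 1 (M - 1),
        (η (i + 1) - η i) * (if a i ≤ u then (1:ℝ) else 0)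
          = if i ≤ k then G i - G (i - 1) else 0 := by
      intro i hi
      simp only [Finset.mem_Icc] at hi
      have hiff : a i ≤ u ↔ i ≤ k := by
        constructor
        · intro h
          by_contra hik
          have hki : (k:ℝ) + 1 ≤ (i:ℝ) := by exact_mod_cast (by omega : k + 1 ≤ i)
          have : ((k:ℝ)+1)/M ≤ (i:ℝ)/M := by gcongr
          have := lt_of_lt_of_le hu.2 this
          exact absurd h (by simpa [hadef] using not_le.mpr this)
        · intro h
          have : (i:ℝ)/M ≤ (k:ℝ)/M := by gcongr <;> exact_mod_cast h
          exact this.trans hu.1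
      rw [(hηs i hi.1).1, (hηs i hi.1).2]
      by_cases h : i ≤ k
      · rw [if_pos (hiff.mpr h), if_pos h, mul_one]
      · have hh : ¬ a i ≤ u := fun hh => h (hiff.mp hh)
        rw [if_neg hh, if_neg h, mul_zero]
    have hfilter : Finset.filter (fun i => i ≤ k) (Finset.Icc 1 (M - 1)) = Finset.Icc 1 k := by
      ext i; simp only [Finset.mem_filter, Finset.mem_Icc]; omega
    calc s u = G 0 + ∑ i ∈ Finset.Icc 1 (M - 1),
          (if i ≤ k then G i - G (i - 1) else 0) := by
          rw [hsdef]; simp only [hη1]; rw [Finset.sum_congr rfl hcond]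
      _ = G 0 + ∑ i ∈ Finset.Icc 1 k, (G i - G (i - 1)) := by
          rw [← Finset.sum_filter, hfilter]
      _ = G k := by rw [tel]; ring
  -- every point of Ico 0 1 lies in a piece
  have hfloor : ∀ u ∈ Ico (0:ℝ) 1, ∃ k : ℕ, k < M ∧ u ∈ Ico ((k:ℝ)/M) (((k:ℝ)+1)/M) := by
    intro u hu
    refine ⟨⌊u * M⌋₊, ?_, ?_, ?_⟩
    · rw [Nat.floor_lt (mul_nonneg hu.1 hMR.le)]
      calc u * M < 1 * M := by nlinarith [hu.2]
        _ = M := one_mul _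
    · rw [div_le_iff₀ hMR]
      exact Nat.floor_le (mul_nonneg hu.1 hMR.le)
    · rw [lt_div_iff₀ hMR]
      exact Nat.lt_floor_add_one (u * M)
  -- pointwise bounds
  have hs_le_σ : ∀ u ∈ Ico (0:ℝ) 1, s u ≤ σ u := by
    intro u hu
    obtain ⟨k, hk, hu'⟩ := hfloor u hu
    rw [hs_eval k hk u hu']
    exact hσm (hmem k hk.le) ⟨hu.1, hu.2.le⟩ hu'.1
  -- measure and integrability setup
  haveI hfin : IsFiniteMeasure (volume.restrict (Icc (0:ℝ) 1)) := by
    constructor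
    rw [Measure.restrict_apply_univ]
    simp [Real.volume_Icc]
  have hsmeas : Measurable s := by
    apply Measurable.add measurable_const
    apply Finset.measurable_sum
    intro i _
    apply Measurable.const_mul
    exact Measurable.ite (measurableSet_le measurable_const measurable_id)
      measurable_const measurable_const
  set B : ℝ := |η 1| + ∑ i ∈ Finset.Icc 1 (M - 1), |η (i + 1) - η i| with hBdef
  have hsbd : ∀ u : ℝ, |s u| ≤ B := by
    intro u
    rw [hsdef, hBdef]
    refine (abs_add_le _ _).trans (add_le_add le_rfl ?_)
    refine (Finset.abs_sum_le_sum_abs _ _).trans (Finset.sum_le_sum fun i _ => ?_)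
    rw [abs_mul]
    rcases le_or_gt (a i) u with h | h
    · simp [h]
    · simp [not_le.mpr h, abs_nonneg]
  have h1mem : (1:ℝ) ∈ Icc (0:ℝ) 1 := by constructor <;> norm_num
  have hσbd : ∀ u ∈ Icc (0:ℝ) 1, |σ u| ≤ σ 1 := by
    intro u hu
    rw [abs_of_nonneg (hσn u hu)]
    exact hσm hu h1mem hu.2
  have hσ1 : σ 1 = G M := by
    show σ 1 = σ ((M:ℝ)/M)
    rw [div_self hMR.ne']
  have hint_σ : IntegrableOn σ (Icc (0:ℝ) 1) volume := by
    refine Integrable.mono' (integrable_const (σ 1)) hσmeas.aestronglyMeasurable ?_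
    filter_upwards [ae_restrict_mem measurableSet_Icc] with u hu
    simpa using hσbd u hu
  have hint_s : IntegrableOn s (Icc (0:ℝ) 1) volume := by
    refine Integrable.mono' (integrable_const B) hsmeas.aestronglyMeasurable ?_
    filter_upwards with u
    simpa using hsbd u
  have hint_qσ : IntegrableOn (fun u => q u * σ u) (Icc (0:ℝ) 1) volume := by
    refine Integrable.mono' (integrable_const (C' * σ 1))
      (hqmeas.mul hσmeas).aestronglyMeasurable ?_
    filter_upwards [hq, ae_restrict_mem measurableSet_Icc] with u h1 h2
    rw [Real.norm_eq_abs, abs_mul]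
    exact mul_le_mul h1 (hσbd u h2) (abs_nonneg _) hC'0
  have hint_qs : IntegrableOn (fun u => q u * s u) (Icc (0:ℝ) 1) volume := by
    refine Integrable.mono' (integrable_const (C' * B))
      (hqmeas.mul hsmeas).aestronglyMeasurable ?_
    filter_upwards [hq] with u h1
    rw [Real.norm_eq_abs, abs_mul]
    exact mul_le_mul h1 (hsbd u) (abs_nonneg _) hC'0
  have hint_f : IntegrableOn (fun u => σ u - s u) (Icc (0:ℝ) 1) volume := hint_σ.sub hint_s
  -- a.e. membership in Ico 0 1
  have hμIco : ∀ᵐ u ∂(volume.restrict (Icc (0:ℝ) 1)), u ∈ Ico (0:ℝ) 1 := by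
    have hone : (volume.restrict (Icc (0:ℝ) 1)) {(1:ℝ)} = 0 := by
      rw [Measure.restrict_apply (measurableSet_singleton 1)]
      exact le_antisymm (le_trans (measure_mono Set.inter_subset_left) (by simp)) (zero_le)
    filter_upwards [ae_restrict_mem measurableSet_Icc,
      (measure_eq_zero_iff_ae_notMem.mp hone)] with u hu hne
    exact ⟨hu.1, lt_of_le_of_ne hu.2 (by simpa using hne)⟩
  -- partition bound: ∫ (σ - s) ≤ σ 1 / M
  have hpart : Ico (0:ℝ) 1 = ⋃ k ∈ Finset.range M, Ico ((k:ℝ)/M) (((k:ℝ)+1)/M) := by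
    ext u
    simp only [mem_iUnion, Finset.mem_range, exists_prop]
    constructor
    · intro hu; exact hfloor u hu
    · rintro ⟨k, hk, hu1, hu2⟩
      constructor
      · exact le_trans (by positivity) hu1
      · refine lt_of_lt_of_le hu2 ?_
        rw [div_le_one hMR]
        exact_mod_cast (by omega : k + 1 ≤ M)
  have hdisj : (↑(Finset.range M) : Set ℕ).Pairwise
      (Function.onFun Disjoint fun k => Ico ((k:ℝ)/M) (((k:ℝ)+1)/M)) := by
    intro k _ l _ hkl
    rw [Function.onFun, Set.Ico_disjoint_Ico]
    rcases lt_or_gt_of_ne hkl with h | h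
    · refine le_trans (min_le_left _ _) (le_trans ?_ (le_max_right _ _))
      gcongr
      exact_mod_cast h
    · refine le_trans (min_le_right _ _) (le_trans ?_ (le_max_left _ _))
      gcongr
      exact_mod_cast h
  have hintegral_piece : ∀ k : ℕ, k < M →
      (∫ u in Ico ((k:ℝ)/M) (((k:ℝ)+1)/M), (σ u - s u)) ≤ (G (k+1) - G k) * (1/M) := by
    intro k hk
    have hsub : Ico ((k:ℝ)/M) (((k:ℝ)+1)/M) ⊆ Icc (0:ℝ) 1 := by
      intro u hu
      constructor
      · exact le_trans (by positivity) hu.1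
      · refine le_of_lt (lt_of_lt_of_le hu.2 ?_)
        rw [div_le_one hMR]
        exact_mod_cast (by omega : k + 1 ≤ M)
    have hintc : IntegrableOn (fun _ : ℝ => G (k+1) - G k) (Ico ((k:ℝ)/M) (((k:ℝ)+1)/M)) volume := by
      refine integrableOn_const ?_
      rw [Real.volume_Ico]
      exact ENNReal.ofReal_ne_top
    have hpt : ∀ u ∈ Ico ((k:ℝ)/M) (((k:ℝ)+1)/M), σ u - s u ≤ G (k+1) - G k := by
      intro u hu
      have h1 : σ u ≤ G (k+1) := by
        have hm : ((k:ℝ)+1)/M ∈ Icc (0:ℝ) 1 := by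
          have := hmem (k+1) (by omega)
          push_cast at this
          exact this
        have hcast : G (k+1) = σ (((k:ℝ)+1)/M) := by
          show σ ((((k+1):ℕ):ℝ)/M) = _
          push_cast
          ring_nf
        rw [hcast]
        exact hσm (hsub hu) hm hu.2.le
      have h2 : s u = G k := hs_eval k hk u hu
      linarith
    calc (∫ u in Ico ((k:ℝ)/M) (((k:ℝ)+1)/M), (σ u - s u))
        ≤ ∫ _u in Ico ((k:ℝ)/M) (((k:ℝ)+1)/M), (G (k+1) - G k) :=
          setIntegral_mono_on (hint_f.mono_set hsub) hintc measurableSet_Ico hpt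
      _ = (G (k+1) - G k) * (1/M) := by
          rw [setIntegral_const, measureReal_def, Real.volume_Ico, smul_eq_mul]
          rw [ENNReal.toReal_ofReal (by rw [sub_nonneg]; gcongr; linarith)]
          have hMd : ((k:ℝ)+1)/M - (k:ℝ)/M = 1/M := by field_simp; ring
          rw [hMd, mul_comm]
  have hB : (∫ u in Icc (0:ℝ) 1, (σ u - s u)) ≤ σ 1 / M := by
    rw [integral_Icc_eq_integral_Ico, hpart]
    rw [integral_biUnion_finset _ (fun _ _ => measurableSet_Ico) hdisj
      (fun k hk => hint_f.mono_set (fun u hu => by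
        refine ⟨le_trans (by positivity) hu.1, le_of_lt (lt_of_lt_of_le hu.2 ?_)⟩
        rw [div_le_one hMR]
        exact_mod_cast (by simp at hk; omega : k + 1 ≤ M)))]
    calc (∑ k ∈ Finset.range M, ∫ u in Ico ((k:ℝ)/M) (((k:ℝ)+1)/M), (σ u - s u))
        ≤ ∑ k ∈ Finset.range M, (G (k+1) - G k) * (1/M) :=
          Finset.sum_le_sum fun k hk => hintegral_piece k (Finset.mem_range.mp hk)
      _ = (G M - G 0) * (1/M) := by rw [← Finset.sum_mul, Finset.sum_range_sub]
      _ ≤ σ 1 / M := by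
          rw [hσ1]
          have hG0 : 0 ≤ G 0 := hσn _ (by simp)
          rw [mul_one_div]
          gcongr
          linarith
  -- assemble
  have hae_nonneg : ∀ᵐ u ∂(volume.restrict (Icc (0:ℝ) 1)), 0 ≤ σ u - s u := by
    filter_upwards [hμIco] with u hu
    linarith [hs_le_σ u hu]
  have hsplit : (∫ u in Icc (0:ℝ) 1, q u * σ u) - (∫ u in Icc (0:ℝ) 1, q u * s u)
      = ∫ u in Icc (0:ℝ) 1, q u * (σ u - s u) := by
    rw [← integral_sub hint_qσ hint_qs]
    congr 1
    funext u
    ring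
  have hint_qf : IntegrableOn (fun u => q u * (σ u - s u)) (Icc (0:ℝ) 1) volume := by
    have heq : (fun u => q u * (σ u - s u)) = fun u => q u * σ u - q u * s u := by
      funext u; ring
    rw [heq]
    exact hint_qσ.sub hint_qs
  have habs : |∫ u in Icc (0:ℝ) 1, q u * (σ u - s u)| ≤ C' * (σ 1 / M) := by
    calc |∫ u in Icc (0:ℝ) 1, q u * (σ u - s u)|
        ≤ ∫ u in Icc (0:ℝ) 1, |q u * (σ u - s u)| := by
          have hni := norm_integral_le_integral_norm
            (μ := volume.restrict (Icc (0:ℝ) 1)) (fun u => q u * (σ u - s u))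
          simpa only [Real.norm_eq_abs] using hni
      _ ≤ ∫ u in Icc (0:ℝ) 1, C' * (σ u - s u) := by
          refine integral_mono_ae hint_qf.abs (hint_f.const_mul C') ?_
          filter_upwards [hq, hae_nonneg] with u h1 h2
          rw [abs_mul]
          exact mul_le_mul h1 (le_of_eq (abs_of_nonneg h2)) (abs_nonneg _) hC'0
      _ = C' * ∫ u in Icc (0:ℝ) 1, (σ u - s u) := integral_const_mul C' _
      _ ≤ C' * (σ 1 / M) := mul_le_mul_of_nonneg_left hB hC'0
  have hfinal : C' * (σ 1 / M) = Cmax * σ 1 / ((1 - γ) * M) := by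
    rw [hC']
    field_simp
  show |(∫ u in Icc (0:ℝ) 1, q u * σ u) - ∫ u in Icc (0:ℝ) 1, q u * s u| ≤ _
  rw [hsplit, ← hfinal]
  exact habs
end

section
/- For the piecewise-linear function g_β(x) = η₁ x + Σ_{i=1}^{M-1}(η_{i+1} - η_i)(x - β[i])₊ with 0 ≤ η₁ ≤ ... ≤ η_M and β[1] ≤ ... ≤ β[M-1], and for the step spectrum σ̃ taking values in {η₁,...,η_M}, the convex conjugate satisfies g_β*(η_j) = Σ_{i=1}^{j-1} (η_{i+1} - η_i) β[i] for each j = 1, ..., M (with the convention that the empty sum is 0), provided β[i] ≥ 0. -/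
theorem stmt_9 (M : ℕ) (hM : 1 ≤ M) (η β : ℕ → ℝ)
    (hη0 : 0 ≤ η 1) (hηmono : ∀ i ∈ Finset.Icc 1 (M - 1), η i ≤ η (i + 1))
    (hβmono : ∀ i ∈ Finset.Icc 1 (M - 2), β i ≤ β (i + 1))
    (hβ0 : ∀ i ∈ Finset.Icc 1 (M - 1), 0 ≤ β i)
    (j : ℕ) (hj : 1 ≤ j) (hjM : j ≤ M) :
    IsLUB (Set.range fun x : ℝ =>
        x * η j - (η 1 * x + ∑ i ∈ Finset.Icc 1 (M - 1),
          (η (i + 1) - η i) * max (x - β i) 0))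
      (∑ i ∈ Finset.Icc 1 (j - 1), (η (i + 1) - η i) * β i) := by
  have hj1M : j - 1 ≤ M - 1 := by omega
  have tele : ∀ n : ℕ, ∑ i ∈ Finset.Icc 1 n, (η (i + 1) - η i) = η (n + 1) - η 1 := by
    intro n
    induction n with
    | zero => simp
    | succ n ih =>
      rw [Finset.sum_Icc_succ_top (by omega), ih]; ring
  have telej : ∑ i ∈ Finset.Icc 1 (j - 1), (η (i + 1) - η i) = η j - η 1 := by
    rw [tele, Nat.sub_add_cancel hj]
  have hc : ∀ i ∈ Finset.Icc 1 (M - 1), 0 ≤ η (i + 1) - η i :=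
    fun i hi => sub_nonneg.2 (hηmono i hi)
  have βmono : ∀ a b : ℕ, 1 ≤ a → a ≤ b → b ≤ M - 1 → β a ≤ β b := by
    intro a b ha hab hb
    induction b with
    | zero => exact absurd (ha.trans hab) (by omega)
    | succ n ih =>
      rcases Nat.lt_or_ge a (n + 1) with h | h
      · exact le_trans (ih (by omega) (by omega))
          (hβmono n (Finset.mem_Icc.2 (by omega)))
      · have : a = n + 1 := by omega
        exact le_of_eq (by rw [this])
  have hIcc : ∀ n : ℕ, Finset.Icc 1 n = Finset.Ioc 0 n := by
    intro n; ext x; simp; omega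
  have hsplit : ∀ F : ℕ → ℝ, ∑ i ∈ Finset.Icc 1 (M - 1), F i
      = ∑ i ∈ Finset.Icc 1 (j - 1), F i + ∑ i ∈ Finset.Ioc (j - 1) (M - 1), F i := by
    intro F
    rw [hIcc, hIcc, Finset.sum_Ioc_consecutive _ (Nat.zero_le _) hj1M]
  have hmemL : ∀ i ∈ Finset.Icc 1 (j - 1), i ∈ Finset.Icc 1 (M - 1) := by
    intro i hi; simp only [Finset.mem_Icc] at *; omega
  have hmemR : ∀ i ∈ Finset.Ioc (j - 1) (M - 1), i ∈ Finset.Icc 1 (M - 1) := by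
    intro i hi; simp only [Finset.mem_Ioc, Finset.mem_Icc] at *; omega
  constructor
  · rintro y ⟨x, rfl⟩
    simp only
    rw [hsplit]
    have e1 : x * η j - η 1 * x = ∑ i ∈ Finset.Icc 1 (j - 1), (η (i + 1) - η i) * x := by
      rw [← Finset.sum_mul, telej]; ring
    have hB : ∑ i ∈ Finset.Icc 1 (j - 1), (η (i + 1) - η i) * x
        - ∑ i ∈ Finset.Icc 1 (j - 1), (η (i + 1) - η i) * max (x - β i) 0
        ≤ ∑ i ∈ Finset.Icc 1 (j - 1), (η (i + 1) - η i) * β i := by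
      rw [← Finset.sum_sub_distrib]
      apply Finset.sum_le_sum
      intro i hi
      have hci := hc i (hmemL i hi)
      have h := le_max_left (x - β i) 0
      nlinarith [mul_le_mul_of_nonneg_left h hci]
    have hC : 0 ≤ ∑ i ∈ Finset.Ioc (j - 1) (M - 1), (η (i + 1) - η i) * max (x - β i) 0 :=
      Finset.sum_nonneg fun i hi => mul_nonneg (hc i (hmemR i hi)) (le_max_right _ _)
    linarith
  · intro b hb
    by_cases hjone : j = 1
    · subst hjone
      simp only [Nat.sub_self, Finset.Icc_self]
      have hval : (0 : ℝ) * η 1 - (η 1 * 0 + ∑ i ∈ Finset.Icc 1 (M - 1),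
          (η (i + 1) - η i) * max ((0 : ℝ) - β i) 0) = ∑ i ∈ Finset.Icc 1 0, (η (i + 1) - η i) * β i := by
        have : ∀ i ∈ Finset.Icc 1 (M - 1), (η (i + 1) - η i) * max ((0 : ℝ) - β i) 0 = 0 := by
          intro i hi
          rw [max_eq_right (by linarith [hβ0 i hi])]
          ring
        rw [Finset.sum_congr rfl this]
        simp
      exact hb ⟨0, hval⟩
    · have hj2 : 2 ≤ j := by omega
      have hval : β (j - 1) * η j - (η 1 * β (j - 1) + ∑ i ∈ Finset.Icc 1 (M - 1),
          (η (i + 1) - η i) * max (β (j - 1) - β i) 0)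
          = ∑ i ∈ Finset.Icc 1 (j - 1), (η (i + 1) - η i) * β i := by
        rw [hsplit]
        have hL : ∑ i ∈ Finset.Icc 1 (j - 1), (η (i + 1) - η i) * max (β (j - 1) - β i) 0
            = ∑ i ∈ Finset.Icc 1 (j - 1), (η (i + 1) - η i) * (β (j - 1) - β i) := by
          apply Finset.sum_congr rfl
          intro i hi
          rw [max_eq_left (sub_nonneg.2 (βmono i (j - 1)
            (Finset.mem_Icc.1 hi).1 (Finset.mem_Icc.1 hi).2 hj1M))]
        have hR : ∑ i ∈ Finset.Ioc (j - 1) (M - 1), (η (i + 1) - η i) * max (β (j - 1) - β i) 0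
            = 0 := by
          apply Finset.sum_eq_zero
          intro i hi
          rw [max_eq_right (sub_nonpos.2 (βmono (j - 1) i (by omega)
            (le_of_lt (Finset.mem_Ioc.1 hi).1) (Finset.mem_Ioc.1 hi).2))]
          ring
        rw [hL, hR]
        have e2 : ∑ i ∈ Finset.Icc 1 (j - 1), (η (i + 1) - η i) * (β (j - 1) - β i)
            = (η j - η 1) * β (j - 1) - ∑ i ∈ Finset.Icc 1 (j - 1), (η (i + 1) - η i) * β i := by
          rw [← telej, Finset.sum_mul, ← Finset.sum_sub_distrib]
          apply Finset.sum_congr rfl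
          intro i _; ring
        rw [e2]; ring
      exact hb ⟨β (j - 1), hval⟩
end

section
/- Under the softmax policy parameterization π_θ(a|s) ∝ exp(θ(s,a)) over a finite action set, suppose the parameter increment Δ(s,a) = θ_{t+1}(s,a) - θ_t(s,a) has zero mean under π_t(·|s) for each s. Then the total variation distance satisfies D_TV(π_{t+1}(·|s), π_t(·|s)) ≤ max_a |θ_{t+1}(s,a) - θ_t(s,a)|. -/
lemma aux_log (x y : ℝ) (hx : 0 < x) (hy : 0 < y) (hxy : y ≤ x) :
    (x - y)^2 / (x + y) ≤ (x - y) * (Real.log x - Real.log y) := by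
  have h0 : Real.log (y / x) ≤ y / x - 1 := Real.log_le_sub_one_of_pos (by positivity)
  rw [Real.log_div (ne_of_gt hy) (ne_of_gt hx)] at h0
  have h1 : (x - y) / x ≤ Real.log x - Real.log y := by
    have : 1 - y / x ≤ Real.log x - Real.log y := by linarith
    calc (x - y) / x = 1 - y / x := by field_simp
    _ ≤ _ := this
  have h2 : (x - y)^2 / (x + y) ≤ (x - y)^2 / x :=
    div_le_div_of_nonneg_left (by positivity) hx (by linarith)
  have h3 : (x - y)^2 / x = (x - y) * ((x - y) / x) := by ring
  calc (x - y)^2 / (x + y) ≤ (x - y)^2 / x := h2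
    _ = (x - y) * ((x - y) / x) := h3
    _ ≤ (x - y) * (Real.log x - Real.log y) :=
        mul_le_mul_of_nonneg_left h1 (by linarith)

lemma aux_log' (x y : ℝ) (hx : 0 < x) (hy : 0 < y) :
    (x - y)^2 / (x + y) ≤ (x - y) * (Real.log x - Real.log y) := by
  rcases le_total y x with h | h
  · exact aux_log x y hx hy h
  · have := aux_log y x hy hx h
    have e1 : (y - x)^2 = (x - y)^2 := by ring
    have e2 : (y - x) * (Real.log y - Real.log x) = (x - y) * (Real.log x - Real.log y) := by ring
    rw [e1, e2, add_comm y x] at this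
    exact this

theorem stmt_12 {A : Type*} [Fintype A] [Nonempty A]
    (πt Δ : A → ℝ) (hpos : ∀ a, 0 < πt a) (hsum : ∑ a, πt a = 1)
    (hmean : ∑ a, πt a * Δ a = 0) :
    (1 / 2) * ∑ a, |πt a * Real.exp (Δ a) / (∑ a', πt a' * Real.exp (Δ a')) - πt a| ≤
      ⨆ a, |Δ a| := by
  classical
  set Z : ℝ := ∑ a', πt a' * Real.exp (Δ a') with hZdef
  have hZ : 0 < Z := Finset.sum_pos (fun a _ => mul_pos (hpos a) (Real.exp_pos _)) ⟨Classical.arbitrary A, Finset.mem_univ _⟩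
  set π' : A → ℝ := fun a => πt a * Real.exp (Δ a) / Z with hπ'def
  have hπ'pos : ∀ a, 0 < π' a := fun a => div_pos (mul_pos (hpos a) (Real.exp_pos _)) hZ
  have hsum' : ∑ a, π' a = 1 := by
    simp only [hπ'def]
    rw [← Finset.sum_div, ← hZdef, div_self (ne_of_gt hZ)]
  set M : ℝ := ⨆ a, |Δ a| with hM
  have hMa : ∀ a, |Δ a| ≤ M := fun a =>
    le_ciSup (f := fun a => |Δ a|) (Set.Finite.bddAbove (Set.finite_range _)) a
  have hM0 : 0 ≤ M := le_trans (abs_nonneg _) (hMa (Classical.arbitrary A))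
  set T : ℝ := ∑ a, |π' a - πt a| with hT
  set S : ℝ := ∑ a, (π' a - πt a) * Δ a with hS
  -- log identity
  have hlog : ∀ a, Real.log (π' a) - Real.log (πt a) = Δ a - Real.log Z := by
    intro a
    simp only [hπ'def]
    rw [Real.log_div (ne_of_gt (mul_pos (hpos a) (Real.exp_pos _))) (ne_of_gt hZ),
      Real.log_mul (ne_of_gt (hpos a)) (Real.exp_ne_zero _), Real.log_exp]
    ring
  -- symmetric KL equals S
  have hsym : ∑ a, (π' a - πt a) * (Real.log (π' a) - Real.log (πt a)) = S := by
    rw [hS]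
    have : ∀ a, (π' a - πt a) * (Real.log (π' a) - Real.log (πt a))
        = (π' a - πt a) * Δ a - (π' a - πt a) * Real.log Z := by
      intro a; rw [hlog a]; ring
    rw [Finset.sum_congr rfl (fun a _ => this a), Finset.sum_sub_distrib,
      ← Finset.sum_mul, Finset.sum_sub_distrib, hsum', hsum]
    simp
  -- chi-square-like lower bound via aux_log'
  have hchi : ∑ a, (π' a - πt a)^2 / (π' a + πt a) ≤ S := by
    rw [← hsym]
    exact Finset.sum_le_sum (fun a _ => aux_log' _ _ (hπ'pos a) (hpos a))
  -- Cauchy-Schwarz : T^2 ≤ (∑ (π'-π)^2/(π'+π)) * 2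
  have hCS : T^2 ≤ (∑ a, (π' a - πt a)^2 / (π' a + πt a)) * 2 := by
    have hw : ∀ a, (0:ℝ) < π' a + πt a := fun a => by
      have := hπ'pos a; have := hpos a; linarith
    have hTeq : T = ∑ a, (|π' a - πt a| / Real.sqrt (π' a + πt a))
        * Real.sqrt (π' a + πt a) := by
      rw [hT]
      refine Finset.sum_congr rfl (fun a _ => ?_)
      rw [div_mul_cancel₀]
      exact ne_of_gt (Real.sqrt_pos.mpr (hw a))
    have key := Finset.sum_mul_sq_le_sq_mul_sq Finset.univ
      (fun a => |π' a - πt a| / Real.sqrt (π' a + πt a))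
      (fun a => Real.sqrt (π' a + πt a))
    rw [← hTeq] at key
    have e1 : ∀ a, (|π' a - πt a| / Real.sqrt (π' a + πt a))^2
        = (π' a - πt a)^2 / (π' a + πt a) := by
      intro a
      rw [div_pow, sq_abs, Real.sq_sqrt (le_of_lt (hw a))]
    have e2 : ∑ a, (Real.sqrt (π' a + πt a))^2 = 2 := by
      have : ∀ a, (Real.sqrt (π' a + πt a))^2 = π' a + πt a := fun a =>
        Real.sq_sqrt (le_of_lt (hw a))
      rw [Finset.sum_congr rfl (fun a _ => this a), Finset.sum_add_distrib, hsum', hsum]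
      norm_num
    calc T^2 ≤ (∑ a, (|π' a - πt a| / Real.sqrt (π' a + πt a))^2)
            * ∑ a, (Real.sqrt (π' a + πt a))^2 := key
      _ = (∑ a, (π' a - πt a)^2 / (π' a + πt a)) * 2 := by
          rw [Finset.sum_congr rfl (fun a _ => e1 a), e2]
  -- S ≤ M * T
  have hSMT : S ≤ M * T := by
    rw [hS, hT, Finset.mul_sum]
    refine Finset.sum_le_sum (fun a _ => ?_)
    calc (π' a - πt a) * Δ a ≤ |(π' a - πt a) * Δ a| := le_abs_self _
      _ = |π' a - πt a| * |Δ a| := abs_mul _ _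
      _ ≤ |π' a - πt a| * M := mul_le_mul_of_nonneg_left (hMa a) (abs_nonneg _)
      _ = M * |π' a - πt a| := mul_comm _ _
  have hT0 : 0 ≤ T := Finset.sum_nonneg (fun a _ => abs_nonneg _)
  -- combine: T^2 ≤ 2 M T
  have hfinal : T^2 ≤ 2 * M * T := by nlinarith
  rcases eq_or_lt_of_le hT0 with h | h
  · rw [← h]; simpa using hM0
  · nlinarith
end
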